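/- A point X of the elliptope ℰ_n = {X ∈ Sym(n) : X ⪰ 0, diag(X) = 𝟙} is a vertex of ℰ_n (i.e., its normal cone at X is full-dimensional in Sym(n)) if and only if X = x xᵀ for some x ∈ {−1, +1}ⁿ. -/

import Mathlib

open Matrix

/-- The subspace of symmetric matrices. -/
def symmetricSubmodule (n : ℕ) : Submodule ℝ (Matrix (Fin n) (Fin n) ℝ) where
  carrier := {A | A.IsSymm}
  add_mem' := by
    intro A B hA hB
    simp only [Set.mem_setOf_eq, Matrix.IsSymm, Matrix.transpose_add] at *
    rw [hA, hB]
  zero_mem' := by simp [Matrix.IsSymm]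
  smul_mem' := by
    intro c A hA
    simp only [Set.mem_setOf_eq, Matrix.IsSymm, Matrix.transpose_smul] at *
    rw [hA]

/-- The elliptope. -/
def elliptope (n : ℕ) : Set (Matrix (Fin n) (Fin n) ℝ) :=
  {X | X.PosSemidef ∧ ∀ i, X i i = 1}

/-- The normal cone (within the space of symmetric matrices) of the elliptope at `X`. -/
def elliptopeNormalCone (n : ℕ) (X : Matrix (Fin n) (Fin n) ℝ) :
    Set (Matrix (Fin n) (Fin n) ℝ) :=
  {A | A.IsSymm ∧ ∀ Y ∈ elliptope n, (A * Y).trace ≤ (A * X).trace}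

namespace EllipHelp

variable {n : ℕ}

lemma trace_mul_vecMulVec (A : Matrix (Fin n) (Fin n) ℝ) (u v : Fin n → ℝ) :
    (A * vecMulVec u v).trace = v ⬝ᵥ (A *ᵥ u) := by
  simp [Matrix.trace, Matrix.diag, Matrix.mul_apply, vecMulVec_apply, dotProduct, mulVec,
    Finset.mul_sum, Finset.sum_mul]
  exact Finset.sum_congr rfl fun k _ => Finset.sum_congr rfl fun m _ => by ring

lemma trace_vecMulVec_mul (u v : Fin n → ℝ) (A : Matrix (Fin n) (Fin n) ℝ) :
    (vecMulVec u v * A).trace = v ⬝ᵥ (A *ᵥ u) := by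
  rw [Matrix.trace_mul_comm, trace_mul_vecMulVec]

lemma trace_single_mul (i : Fin n) (Y : Matrix (Fin n) (Fin n) ℝ) :
    (Matrix.single i i (1:ℝ) * Y).trace = Y i i := by
  rw [Matrix.single_eq_single_vecMulVec_single, trace_vecMulVec_mul]
  simp [single_dotProduct, mulVec_single]

lemma vecMulVec_isSymm (y : Fin n → ℝ) : (vecMulVec y y).IsSymm := by
  ext a b; simp [Matrix.transpose_apply, vecMulVec_apply, mul_comm]

lemma single_mem_nc {X : Matrix (Fin n) (Fin n) ℝ} (hX : X ∈ elliptope n) (i : Fin n) :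
    Matrix.single i i (1:ℝ) ∈ elliptopeNormalCone n X := by
  refine ⟨?_, ?_⟩
  · rw [Matrix.single_eq_single_vecMulVec_single]; exact vecMulVec_isSymm _
  · intro Y hY
    rw [trace_single_mul, trace_single_mul, hY.2 i, hX.2 i]

lemma neg_vecMulVec_mem_nc {X : Matrix (Fin n) (Fin n) ℝ} (hX : X ∈ elliptope n)
    {y : Fin n → ℝ} (h0 : y ⬝ᵥ (X *ᵥ y) = 0) :
    -(vecMulVec y y) ∈ elliptopeNormalCone n X := by
  refine ⟨?_, ?_⟩
  · have := vecMulVec_isSymm y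
    simpa [Matrix.IsSymm, Matrix.transpose_neg] using congrArg Neg.neg this
  · intro Y hY
    rw [neg_mul, neg_mul, Matrix.trace_neg, Matrix.trace_neg, trace_vecMulVec_mul,
      trace_vecMulVec_mul, h0, neg_zero]
    have := hY.1.dotProduct_mulVec_nonneg y
    simp only [star_trivial] at this
    linarith

lemma vecMulVec_mulVec' (u v w : Fin n → ℝ) : vecMulVec u v *ᵥ w = (v ⬝ᵥ w) • u := by
  ext a
  simp [mulVec, vecMulVec_apply, dotProduct, Finset.sum_mul, Pi.smul_apply, smul_eq_mul]
  exact Finset.sum_congr rfl fun m _ => by ring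

lemma mul_vecMulVec' (X : Matrix (Fin n) (Fin n) ℝ) (u v : Fin n → ℝ) :
    X * vecMulVec u v = vecMulVec (X *ᵥ u) v := by
  ext a b
  simp [mul_apply, vecMulVec_apply, mulVec, dotProduct, Finset.sum_mul]
  exact Finset.sum_congr rfl fun m _ => by ring

lemma vecMulVec_mul' (u v : Fin n → ℝ) (X : Matrix (Fin n) (Fin n) ℝ) :
    vecMulVec u v * X = vecMulVec u (Xᵀ *ᵥ v) := by
  ext a b
  simp [mul_apply, vecMulVec_apply, mulVec, dotProduct, Finset.mul_sum, transpose_apply]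
  exact Finset.sum_congr rfl fun m _ => by ring

lemma vecMulVec_mul_vecMulVec' (a b u v : Fin n → ℝ) :
    vecMulVec a b * vecMulVec u v = (b ⬝ᵥ u) • vecMulVec a v := by
  rw [mul_vecMulVec', vecMulVec_mulVec']
  ext p q
  simp [vecMulVec_apply, Pi.smul_apply, smul_eq_mul]
  ring

lemma vecMulVec_sub_single (i j : Fin n) (hij : i ≠ j) (c d : ℝ) :
    vecMulVec (c • (Pi.single i 1 : Fin n → ℝ) - d • (Pi.single j 1 : Fin n → ℝ))
      (c • (Pi.single i 1 : Fin n → ℝ) - d • (Pi.single j 1 : Fin n → ℝ)) =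
    (c*c) • Matrix.single i i (1:ℝ) + (d*d) • Matrix.single j j 1
      - (c*d) • (Matrix.single i j 1 + Matrix.single j i 1) := by
  ext a b
  by_cases ha : a = i <;> by_cases ha' : a = j <;> by_cases hb : b = i <;> by_cases hb' : b = j <;>
    simp_all [vecMulVec_apply, Matrix.single, Pi.single_apply, eq_comm] <;> ring

lemma dot_symm {A : Matrix (Fin n) (Fin n) ℝ} (hA : A.IsSymm) (u v : Fin n → ℝ) :
    u ⬝ᵥ (A *ᵥ v) = v ⬝ᵥ (A *ᵥ u) := by
  have haij : ∀ a b, A a b = A b a := fun a b => by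
    conv_lhs => rw [← hA]
    rw [Matrix.transpose_apply]
  simp only [dotProduct, mulVec, Finset.mul_sum]
  rw [Finset.sum_comm]
  exact Finset.sum_congr rfl fun k _ => Finset.sum_congr rfl fun m _ => by rw [haij k m]; ring

lemma triple (X : Matrix (Fin n) (Fin n) ℝ) (hpsd : X.PosSemidef)
    (hd : ∀ i, X i i = 1) (hs : ∀ a b, X a b = X b a) (i j k : Fin n)
    (ha : X i j = 1 ∨ X i j = -1) (hb : X i k = 1 ∨ X i k = -1)
    (hc : X j k = 1 ∨ X j k = -1) :
    X j k = X i j * X i k := by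
  have h := hpsd.dotProduct_mulVec_nonneg ((Pi.single i 1 : Fin n → ℝ) - X i j • (Pi.single j 1 : Fin n → ℝ)
    - X i k • (Pi.single k 1 : Fin n → ℝ))
  simp only [star_trivial, mulVec_sub, mulVec_smul, dotProduct_sub, sub_dotProduct,
    dotProduct_smul, smul_dotProduct, mulVec_single, single_dotProduct, smul_eq_mul,
    mul_one, MulOpposite.op_one, one_smul, one_mul, col_apply] at h
  rw [hd i, hd j, hd k, hs j i, hs k i, hs k j] at h
  rcases ha with ha | ha <;> rcases hb with hb | hb <;> rcases hc with hc | hc <;>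
    rw [ha, hb, hc] at h ⊢ <;> (revert h; norm_num)

lemma entry_sq_le (X : Matrix (Fin n) (Fin n) ℝ) (hpsd : X.PosSemidef)
    (hd : ∀ i, X i i = 1) (hs : ∀ a b, X a b = X b a) (i j : Fin n) :
    X i j ^ 2 ≤ 1 := by
  have h := hpsd.dotProduct_mulVec_nonneg ((Pi.single i 1 : Fin n → ℝ) - X i j • (Pi.single j 1 : Fin n → ℝ))
  simp only [star_trivial, mulVec_sub, mulVec_smul, dotProduct_sub, sub_dotProduct,
    dotProduct_smul, smul_dotProduct, mulVec_single, single_dotProduct, smul_eq_mul,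
    mul_one, MulOpposite.op_one, one_smul, one_mul, col_apply] at h
  rw [hd i, hd j, hs j i] at h
  nlinarith [h]

lemma circle_aux {a b : ℝ} (h : ∀ c s : ℝ, c^2 + s^2 = 1 → (c - 1) * a + s * b ≤ 0) :
    b = 0 := by
  rcases eq_or_ne (a^2 + b^2) 0 with h0 | h0
  · nlinarith [sq_nonneg a, sq_nonneg b]
  · set ρ := Real.sqrt (a^2 + b^2) with hρdef
    have hnn : (0:ℝ) ≤ a^2 + b^2 := by positivity
    have hρ2 : ρ^2 = a^2 + b^2 := Real.sq_sqrt hnn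
    have hρpos : 0 < ρ := Real.sqrt_pos.mpr (lt_of_le_of_ne hnn (Ne.symm h0))
    have hcs : (a/ρ)^2 + (b/ρ)^2 = 1 := by
      field_simp
      linarith [hρ2]
    have h1 := h (a/ρ) (b/ρ) hcs
    have h2 : a^2 + b^2 - ρ * a ≤ 0 := by
      have := mul_le_mul_of_nonneg_left h1 (le_of_lt hρpos)
      field_simp at this
      nlinarith [this]
    -- ρ ≤ a and a ≤ ρ
    have ha_le : a ≤ ρ := by nlinarith [hρ2, sq_nonneg b, sq_nonneg (ρ - a), hρpos]
    nlinarith [h2, hρ2, ha_le, hρpos]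

end EllipHelp

open EllipHelp

/-- A point of the elliptope is a vertex (its normal cone is full-dimensional in
the space of symmetric matrices) if and only if it is `x xᵀ` for a `±1` vector `x`. -/
theorem elliptope_vertex_iff (n : ℕ) (X : Matrix (Fin n) (Fin n) ℝ)
    (hX : X ∈ elliptope n) :
    Submodule.span ℝ (elliptopeNormalCone n X) = symmetricSubmodule n ↔
      ∃ x : Fin n → ℝ, (∀ i, x i = 1 ∨ x i = -1) ∧ X = Matrix.vecMulVec x x := by
  have hpsd := hX.1
  have hd := hX.2
  have hs : ∀ a b, X a b = X b a := fun a b => by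
    conv_lhs => rw [← hpsd.1]
    simp [Matrix.conjTranspose_apply]
  have hXt : Xᵀ = X := by ext a b; rw [Matrix.transpose_apply]; exact hs b a
  constructor
  · -- forward direction
    intro hspan
    have hpm : ∀ a b, X a b = 1 ∨ X a b = -1 := by
      by_contra hcon
      push_neg at hcon
      obtain ⟨i, j, h1, h2⟩ := hcon
      have hb : X i j ^ 2 ≤ 1 := entry_sq_le X hpsd hd hs i j
      have hlt : X i j ^ 2 < 1 := by
        rcases lt_or_eq_of_le hb with h | h
        · exact h
        · exfalso
          have hz : (X i j - 1) * (X i j + 1) = 0 := by nlinarith [h]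
          rcases mul_eq_zero.mp hz with h' | h'
          · exact h1 (by linarith)
          · exact h2 (by linarith)
      set r := Real.sqrt (1 - X i j ^ 2) with hrdef
      have hr2 : r ^ 2 = 1 - X i j ^ 2 := Real.sq_sqrt (by linarith)
      have hrpos : 0 < r := Real.sqrt_pos.mpr (by linarith)
      set z : Fin n → ℝ :=
        r⁻¹ • (X i j • (Pi.single i 1 : Fin n → ℝ) - (Pi.single j 1 : Fin n → ℝ)) with hz
      set p : Fin n → ℝ := X *ᵥ z with hp
      have hpi : p i = 0 := by
        rw [hp, hz, mulVec_smul, mulVec_sub, mulVec_smul]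
        simp [mulVec_single, hd i, hs i j]
      have hpj : p j = -r := by
        rw [hp, hz, mulVec_smul, mulVec_sub, mulVec_smul]
        simp [mulVec_single, hd j]
        rw [hs j i]
        field_simp
        nlinarith [hr2]
      have hzXi : z ⬝ᵥ (X *ᵥ (Pi.single i 1 : Fin n → ℝ)) = 0 := by
        rw [hz]
        simp [smul_dotProduct, sub_dotProduct, mulVec_single, single_dotProduct, hd i, hs j i,
          smul_eq_mul]
      have hzXz : z ⬝ᵥ (X *ᵥ z) = 1 := by
        rw [hz, mulVec_smul, mulVec_sub, mulVec_smul]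
        simp [smul_dotProduct, sub_dotProduct, dotProduct_smul, dotProduct_sub, mulVec_single,
          single_dotProduct, dotProduct_single, hd i, hd j, hs j i, smul_eq_mul]
        field_simp
        nlinarith [hr2]
      -- every element of the normal cone kills the functional A ↦ (A *ᵥ p) i
      have hβ : ∀ A ∈ elliptopeNormalCone n X, (A *ᵥ p) i = 0 := by
        intro A hA
        set e : Fin n → ℝ := (Pi.single i 1 : Fin n → ℝ) with he
        set α : ℝ := (A *ᵥ (X *ᵥ e)) i - A i i with hα
        apply circle_aux (a := α)
        intro c s hcs
        set q : Fin n → ℝ := (c - 1) • e + s • z with hq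
        have hXq : X *ᵥ q = (c-1) • (X *ᵥ e) + s • p := by
          rw [hq, mulVec_add, mulVec_smul, mulVec_smul, hp]
        have hXq_i : (X *ᵥ q) i = c - 1 := by
          rw [hXq]
          simp [he, mulVec_single, hd i, hpi]
        have hqXq : q ⬝ᵥ (X *ᵥ q) = 2 - 2*c := by
          rw [hXq, hq]
          simp only [add_dotProduct, dotProduct_add, smul_dotProduct, dotProduct_smul,
            smul_eq_mul]
          have h1 : e ⬝ᵥ (X *ᵥ e) = 1 := by simp [he, mulVec_single, single_dotProduct, hd i]
          have h2 : e ⬝ᵥ p = 0 := by simp [he, single_dotProduct, hpi]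
          have h3 : z ⬝ᵥ (X *ᵥ e) = 0 := hzXi
          have h4 : z ⬝ᵥ p = 1 := by rw [hp]; exact hzXz
          rw [h1, h2, h3, h4]
          nlinarith [hcs]
        set P : Matrix (Fin n) (Fin n) ℝ := 1 + vecMulVec e q with hP
        have hPH : Pᴴ = Pᵀ := by
          ext a b; simp [Matrix.conjTranspose_apply, Matrix.transpose_apply]
        have hYpsd : (P * X * Pᵀ).PosSemidef := by
          have := hpsd.mul_mul_conjTranspose_same P
          rwa [hPH] at this
        have hUt : (vecMulVec e q)ᵀ = vecMulVec q e := by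
          ext a b; simp [Matrix.transpose_apply, vecMulVec_apply, mul_comm]
        have hYeq : P * X * Pᵀ = X + vecMulVec e (X *ᵥ q) + vecMulVec (X *ᵥ q) e
            + (q ⬝ᵥ (X *ᵥ q)) • vecMulVec e e := by
          rw [hP, Matrix.transpose_add, Matrix.transpose_one, hUt]
          have expand : (1 + vecMulVec e q) * X * (1 + vecMulVec q e) =
              X + vecMulVec e q * X + X * vecMulVec q e
                + vecMulVec e q * X * vecMulVec q e := by noncomm_ring
          rw [expand, vecMulVec_mul' e q X, hXt,
            vecMulVec_mul_vecMulVec', mul_vecMulVec', dotProduct_comm]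
        have hYell : P * X * Pᵀ ∈ elliptope n := by
          refine ⟨hYpsd, fun k => ?_⟩
          rw [hYeq]
          by_cases hk : k = i
          · subst hk
            simp only [Matrix.add_apply, Matrix.smul_apply, vecMulVec_apply, smul_eq_mul]
            rw [hd k, hqXq, hXq_i]
            have hek : e k = 1 := Pi.single_eq_same k 1
            rw [hek]; ring
          · simp only [Matrix.add_apply, Matrix.smul_apply, vecMulVec_apply, smul_eq_mul]
            have hek : e k = 0 := Pi.single_eq_of_ne hk 1
            rw [hek, hd k]; ring
        have hle := hA.2 _ hYell
        rw [hYeq] at hle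
        rw [Matrix.mul_add, Matrix.mul_add, Matrix.mul_add, Matrix.trace_add, Matrix.trace_add,
          Matrix.trace_add, Matrix.mul_smul, Matrix.trace_smul, trace_mul_vecMulVec,
          trace_mul_vecMulVec, trace_mul_vecMulVec] at hle
        have hswap : (X *ᵥ q) ⬝ᵥ (A *ᵥ e) = e ⬝ᵥ (A *ᵥ (X *ᵥ q)) := dot_symm hA.1 _ _
        rw [hswap] at hle
        have hterm : e ⬝ᵥ (A *ᵥ (X *ᵥ q)) = (c-1) * ((A *ᵥ (X *ᵥ e)) i) + s * ((A *ᵥ p) i) := by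
          rw [hXq, mulVec_add, mulVec_smul, mulVec_smul]
          simp [he, single_dotProduct, Pi.add_apply, Pi.smul_apply, smul_eq_mul]
        have hAe : e ⬝ᵥ (A *ᵥ e) = A i i := by
          simp [he, single_dotProduct, mulVec_single]
        rw [hterm, hAe, hqXq, smul_eq_mul] at hle
        rw [hα]
        nlinarith [hle]
      -- derive a contradiction: the span is contained in a proper subspace
      let L : Matrix (Fin n) (Fin n) ℝ →ₗ[ℝ] ℝ :=
        { toFun := fun A => (A *ᵥ p) i
          map_add' := fun A B => by simp [Matrix.add_mulVec, Pi.add_apply]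
          map_smul' := fun c A => by simp [Matrix.smul_mulVec, Pi.smul_apply] }
      have hker : Submodule.span ℝ (elliptopeNormalCone n X) ≤ LinearMap.ker L :=
        Submodule.span_le.mpr fun A hA => LinearMap.mem_ker.mpr (hβ A hA)
      set B := vecMulVec (Pi.single i 1 : Fin n → ℝ) p
          + vecMulVec p (Pi.single i 1 : Fin n → ℝ) with hB
      have hBsymm : B.IsSymm := by
        ext a b
        rw [hB]
        simp [Matrix.transpose_apply, Matrix.add_apply, vecMulVec_apply]
        ring
      have hBmem : B ∈ Submodule.span ℝ (elliptopeNormalCone n X) := by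
        rw [hspan]; exact hBsymm
      have hLB : L B = p ⬝ᵥ p := by
        show (B *ᵥ p) i = p ⬝ᵥ p
        rw [hB, Matrix.add_mulVec, vecMulVec_mulVec', vecMulVec_mulVec']
        simp [Pi.add_apply, Pi.smul_apply, smul_eq_mul, Pi.single_eq_same,
          single_dotProduct, hpi]
      have hzero := hker hBmem
      rw [LinearMap.mem_ker, hLB] at hzero
      have hpzero : p = 0 := dotProduct_self_eq_zero.mp hzero
      have hpj0 : p j = 0 := by rw [hpzero]; rfl
      rw [hpj] at hpj0; linarith
    rcases Nat.eq_zero_or_pos n with hn | hn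
    · subst hn
      exact ⟨fun _ => 1, fun i => i.elim0, by ext a b; exact a.elim0⟩
    · refine ⟨fun k => X k ⟨0, hn⟩, fun k => hpm k ⟨0, hn⟩, ?_⟩
      ext a b
      have htr := triple X hpsd hd hs ⟨0, hn⟩ a b (hpm _ a) (hpm _ b) (hpm a b)
      rw [vecMulVec_apply]
      rw [hs a ⟨0, hn⟩, hs b ⟨0, hn⟩]
      exact htr
  · -- backward direction
    rintro ⟨x, hx, rfl⟩
    apply le_antisymm
    · exact Submodule.span_le.mpr fun A hA => hA.1
    · intro A hA
      have hmem : ∀ i j : Fin n, Matrix.single i j (1:ℝ) + Matrix.single j i 1 ∈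
          Submodule.span ℝ (elliptopeNormalCone n (vecMulVec x x)) := by
        intro i j
        by_cases hij : i = j
        · subst hij
          exact add_mem (Submodule.subset_span (single_mem_nc hX i))
            (Submodule.subset_span (single_mem_nc hX i))
        · set y : Fin n → ℝ :=
            x j • (Pi.single i 1 : Fin n → ℝ) - x i • (Pi.single j 1 : Fin n → ℝ) with hy
          have h0 : y ⬝ᵥ (vecMulVec x x *ᵥ y) = 0 := by
            rw [vecMulVec_mulVec']
            have hxy : x ⬝ᵥ y = 0 := by
              simp [hy, dotProduct_sub, dotProduct_smul, dotProduct_single, smul_eq_mul]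
              ring
            rw [hxy, zero_smul, dotProduct_zero]
          have hsqi : x i * x i = 1 := by rcases hx i with h | h <;> rw [h] <;> norm_num
          have hsqj : x j * x j = 1 := by rcases hx j with h | h <;> rw [h] <;> norm_num
          have hyy := vecMulVec_sub_single i j hij (x j) (x i)
          rw [← hy, hsqi, hsqj, one_smul, one_smul] at hyy
          have hident : Matrix.single i j (1:ℝ) + Matrix.single j i 1 =
              (x j * x i) • (Matrix.single i i 1 + Matrix.single j j 1 + -(vecMulVec y y)) := by
            rw [hyy]
            have habel : Matrix.single i i (1:ℝ) + Matrix.single j j 1 +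
                -(Matrix.single i i 1 + Matrix.single j j 1
                  - (x j * x i) • (Matrix.single i j 1 + Matrix.single j i 1)) =
                (x j * x i) • (Matrix.single i j 1 + Matrix.single j i 1) := by abel
            rw [habel, smul_smul]
            have h2 : (x j * x i) * (x j * x i) = 1 := by nlinarith [hsqi, hsqj]
            rw [h2, one_smul]
          rw [hident]
          exact Submodule.smul_mem _ _ (add_mem (add_mem
            (Submodule.subset_span (single_mem_nc hX i))
            (Submodule.subset_span (single_mem_nc hX j)))
            (Submodule.subset_span (neg_vecMulVec_mem_nc hX h0)))
      have hAsymm : A.IsSymm := hA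
      have h2A : ∑ i, ∑ j, A i j • (Matrix.single i j (1:ℝ) + Matrix.single j i 1)
          = A + Aᵀ := by
        simp only [smul_add, Finset.sum_add_distrib, Matrix.smul_single, smul_eq_mul, mul_one]
        congr 1
        · exact (Matrix.matrix_eq_sum_single A).symm
        · rw [Finset.sum_comm]
          conv_rhs => rw [Matrix.matrix_eq_sum_single Aᵀ]
          exact Finset.sum_congr rfl fun j _ => Finset.sum_congr rfl fun i _ => by
            rw [Matrix.transpose_apply]
      have hrepr : A = (2⁻¹ : ℝ) •
          (∑ i, ∑ j, A i j • (Matrix.single i j (1:ℝ) + Matrix.single j i 1)) := by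
        rw [h2A, hAsymm.eq, ← two_smul ℝ A, smul_smul]
        norm_num
      rw [hrepr]
      exact Submodule.smul_mem _ _ (Submodule.sum_mem _ fun i _ => Submodule.sum_mem _
        fun j _ => Submodule.smul_mem _ _ (hmem i j))
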